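/- Let q ≥ 2, let K ≅ SO(q) act on R^{1+q} fixing the first coordinate and rotating the last q, let c ∈ R^{1+q} be a nonzero isotropic vector for the signature-(1,q) form with c₁ > 0, and let ρ ∈ R. Then the function u(x) = ∫_K (kc·x)^ρ dk on S^{1,q} (Haar probability measure on K) is K-invariant, and its degree-ρ homogeneous extension f(x) = |x|^ρ u(x/|x|) to {x : x·x > 0, x₁ > 0} satisfies Δf = 0 for the signature-(1,q) Laplacian. -/

import Mathlib

open scoped BigOperators
open MeasureTheory Topology

noncomputable section

instance {q : ℕ} : MeasurableSpace (Matrix (Fin q) (Fin q) ℝ) :=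
  inferInstanceAs (MeasurableSpace (Fin q → Fin q → ℝ))

def eps (p : ℕ) {n : ℕ} (i : Fin n) : ℝ := if (i : ℕ) < p then 1 else -1

def qdot (p : ℕ) {n : ℕ} (x y : Fin n → ℝ) : ℝ := ∑ i, eps p i * x i * y i

def lapR (p : ℕ) {n : ℕ} (f : (Fin n → ℝ) → ℝ) (x : Fin n → ℝ) : ℝ :=
  ∑ i, eps p i * fderiv ℝ (fun y => fderiv ℝ f y (Pi.single i 1)) x (Pi.single i 1)

/-- Action of a `q × q` matrix on `ℝ^{1+q}` fixing the first coordinate. -/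
def act {q : ℕ} (A : Matrix (Fin q) (Fin q) ℝ) (x : Fin (q + 1) → ℝ) : Fin (q + 1) → ℝ :=
  Fin.cons (x 0) (A.mulVec (Fin.tail x))

namespace KASH

lemma eps_zero {n : ℕ} : eps 1 (0 : Fin (n+1)) = 1 := by simp [eps]

lemma eps_succ {n : ℕ} (i : Fin n) : eps 1 (i.succ : Fin (n+1)) = -1 := by
  simp [eps, Fin.val_succ]

lemma qdot_split {q : ℕ} (u v : Fin (q+1) → ℝ) :
    qdot 1 u v = u 0 * v 0 - dotProduct (Fin.tail u) (Fin.tail v) := by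
  unfold qdot dotProduct
  rw [Fin.sum_univ_succ]
  simp only [eps_zero, eps_succ, Fin.tail, one_mul]
  simp only [neg_mul, one_mul]
  rw [Finset.sum_neg_distrib, ← sub_eq_add_neg]

lemma act_zero {q : ℕ} (A : Matrix (Fin q) (Fin q) ℝ) (x : Fin (q+1) → ℝ) :
    act A x 0 = x 0 := rfl

lemma tail_act {q : ℕ} (A : Matrix (Fin q) (Fin q) ℝ) (x : Fin (q+1) → ℝ) :
    Fin.tail (act A x) = A.mulVec (Fin.tail x) := by
  simp [act, Fin.tail_cons]

lemma qdot_act_left {q : ℕ} (A : Matrix (Fin q) (Fin q) ℝ) (c y : Fin (q+1) → ℝ) :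
    qdot 1 (act A c) y = c 0 * y 0 - dotProduct (A.mulVec (Fin.tail c)) (Fin.tail y) := by
  rw [qdot_split, act_zero, tail_act]

lemma transpose_mul_self {q : ℕ} {A : Matrix (Fin q) (Fin q) ℝ}
    (hA : A ∈ Matrix.orthogonalGroup (Fin q) ℝ) : A.transpose * A = 1 := by
  have h := (Matrix.mem_orthogonalGroup_iff (Fin q) ℝ).1 hA
  have hs : star A = A.transpose := rfl
  exact mul_eq_one_comm.1 h

lemma mulVec_dot {q : ℕ} {A : Matrix (Fin q) (Fin q) ℝ}
    (hA : A ∈ Matrix.orthogonalGroup (Fin q) ℝ) (u v : Fin q → ℝ) :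
    dotProduct (A.mulVec u) (A.mulVec v) = dotProduct u v := by
  rw [Matrix.dotProduct_mulVec, ← Matrix.mulVec_transpose, Matrix.mulVec_mulVec,
    transpose_mul_self hA, Matrix.one_mulVec]

lemma qdot_act_act {q : ℕ} {A : Matrix (Fin q) (Fin q) ℝ}
    (hA : A ∈ Matrix.orthogonalGroup (Fin q) ℝ) (u v : Fin (q+1) → ℝ) :
    qdot 1 (act A u) (act A v) = qdot 1 u v := by
  rw [qdot_split, qdot_split, act_zero, act_zero, tail_act, tail_act, mulVec_dot hA]






def lin {n : ℕ} (w : Fin n → ℝ) : (Fin n → ℝ) →L[ℝ] ℝ :=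
  ∑ i, (eps 1 i * w i) • (ContinuousLinearMap.proj i)

lemma lin_apply {n : ℕ} (w y : Fin n → ℝ) : lin w y = qdot 1 w y := by
  simp [lin, qdot, ContinuousLinearMap.sum_apply, mul_assoc]

lemma qdot_single {n : ℕ} (w : Fin n → ℝ) (i : Fin n) :
    qdot 1 w (Pi.single i 1) = eps 1 i * w i := by
  unfold qdot
  rw [Finset.sum_eq_single i]
  · simp
  · intro j _ hj; simp [Pi.single_apply, hj]
  · simp

lemma abs_sum_le {n : ℕ} (a : Fin n → ℝ) :
    ∑ i, |a i| ≤ Real.sqrt n * Real.sqrt (∑ i, (a i)^2) := by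
  have h := Finset.sum_mul_sq_le_sq_mul_sq Finset.univ (fun i => (1:ℝ)) (fun i => |a i|)
  simp only [one_mul, one_pow, Finset.sum_const, Finset.card_univ, Fintype.card_fin,
    nsmul_eq_mul, mul_one, sq_abs] at h
  have h0 : 0 ≤ ∑ i, |a i| := Finset.sum_nonneg fun i _ => abs_nonneg _
  calc ∑ i, |a i| = Real.sqrt ((∑ i, |a i|)^2) := (Real.sqrt_sq h0).symm
    _ ≤ Real.sqrt ((n : ℝ) * ∑ i, (a i)^2) := Real.sqrt_le_sqrt h
    _ = Real.sqrt n * Real.sqrt (∑ i, (a i)^2) := Real.sqrt_mul (Nat.cast_nonneg n) _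

lemma abs_dot_le {n : ℕ} (a b : Fin n → ℝ) :
    |dotProduct a b| ≤ Real.sqrt (∑ i, (a i)^2) * Real.sqrt (∑ i, (b i)^2) := by
  have h := Finset.sum_mul_sq_le_sq_mul_sq Finset.univ a b
  have h0 : |dotProduct a b| = Real.sqrt ((∑ i, a i * b i)^2) := by
    rw [Real.sqrt_sq_eq_abs]; rfl
  rw [h0, ← Real.sqrt_mul (Finset.sum_nonneg fun i _ => sq_nonneg _)]
  exact Real.sqrt_le_sqrt h

lemma norm_lin_le {n : ℕ} (w : Fin n → ℝ) : ‖lin w‖ ≤ ∑ i, |w i| := by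
  apply ContinuousLinearMap.opNorm_le_bound _ (Finset.sum_nonneg fun i _ => abs_nonneg _)
  intro y
  rw [lin_apply]
  calc ‖qdot 1 w y‖ = |∑ i, eps 1 i * w i * y i| := rfl
    _ ≤ ∑ i, |eps 1 i * w i * y i| := Finset.abs_sum_le_sum_abs _ _
    _ ≤ ∑ i, |w i| * ‖y‖ := by
        apply Finset.sum_le_sum; intro i _
        rw [abs_mul, abs_mul]
        have he : |eps 1 i| = 1 := by unfold eps; split_ifs <;> simp
        rw [he, one_mul]
        have hy := norm_le_pi_norm y i
        rw [Real.norm_eq_abs] at hy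
        exact mul_le_mul_of_nonneg_left hy (abs_nonneg _)
    _ = (∑ i, |w i|) * ‖y‖ := by rw [Finset.sum_mul]



def nt {q : ℕ} (y : Fin (q+1) → ℝ) : ℝ := Real.sqrt (∑ i, (Fin.tail y i)^2)

lemma nt_nonneg {q : ℕ} (y : Fin (q+1) → ℝ) : 0 ≤ nt y := Real.sqrt_nonneg _

lemma dot_self_eq {n : ℕ} (a : Fin n → ℝ) : dotProduct a a = ∑ i, (a i)^2 := by
  unfold dotProduct; apply Finset.sum_congr rfl; intro i _; ring

lemma sum_tail_sq {q : ℕ} {c : Fin (q+1) → ℝ} (hiso : qdot 1 c c = 0) :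
    ∑ i, (Fin.tail c i)^2 = (c 0)^2 := by
  have h := qdot_split c c
  rw [hiso, dot_self_eq] at h
  nlinarith [h]

lemma norm_tail_act {q : ℕ} {c : Fin (q+1) → ℝ} (hiso : qdot 1 c c = 0) (hc0 : 0 < c 0)
    {k : Matrix (Fin q) (Fin q) ℝ} (hk : k ∈ Matrix.orthogonalGroup (Fin q) ℝ) :
    ∑ i, (Fin.tail (act k c) i)^2 = (c 0)^2 := by
  rw [tail_act, ← dot_self_eq, mulVec_dot hk, dot_self_eq, sum_tail_sq hiso]

lemma qdot_act_ge {q : ℕ} {c : Fin (q+1) → ℝ} (hiso : qdot 1 c c = 0) (hc0 : 0 < c 0)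
    {k : Matrix (Fin q) (Fin q) ℝ} (hk : k ∈ Matrix.orthogonalGroup (Fin q) ℝ)
    (y : Fin (q+1) → ℝ) :
    c 0 * (y 0 - nt y) ≤ qdot 1 (act k c) y ∧ qdot 1 (act k c) y ≤ c 0 * (y 0 + nt y) := by
  rw [qdot_act_left]
  have hd : |dotProduct (k.mulVec (Fin.tail c)) (Fin.tail y)| ≤ c 0 * nt y := by
    have h := abs_dot_le (k.mulVec (Fin.tail c)) (Fin.tail y)
    have h2 : Real.sqrt (∑ i, (k.mulVec (Fin.tail c) i)^2) = c 0 := by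
      have h3 : ∑ i, ((k.mulVec (Fin.tail c)) i)^2 = (c 0)^2 := by
        have := norm_tail_act hiso hc0 hk (c := c)
        rwa [tail_act] at this
      rw [h3, Real.sqrt_sq hc0.le]
    rw [h2] at h
    exact h
  constructor
  · nlinarith [abs_le.1 hd]
  · nlinarith [abs_le.1 hd]

lemma nt_lt {q : ℕ} {y : Fin (q+1) → ℝ} (hy0 : 0 < y 0) (hyy : 0 < qdot 1 y y) :
    nt y < y 0 := by
  have h := qdot_split y y
  rw [dot_self_eq] at h
  have h2 : (nt y)^2 = ∑ i, (Fin.tail y i)^2 := Real.sq_sqrt (Finset.sum_nonneg fun i _ => sq_nonneg _)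
  nlinarith [nt_nonneg y]

lemma measurable_entry {q : ℕ} (i j : Fin q) :
    Measurable fun A : Matrix (Fin q) (Fin q) ℝ => A i j :=
  (measurable_pi_apply j).comp (measurable_pi_apply i)

lemma measurable_qdot_act {q : ℕ} (c y : Fin (q+1) → ℝ) :
    Measurable fun k : Matrix (Fin q) (Fin q) ℝ => qdot 1 (act k c) y := by
  simp only [qdot_act_left, Matrix.mulVec, dotProduct]
  apply Measurable.sub measurable_const
  apply Finset.measurable_sum
  intro i _
  apply Measurable.mul _ measurable_const
  apply Finset.measurable_sum
  intro j _
  exact (measurable_entry i j).mul_const _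

lemma asm_rpow {q : ℕ} (c : Fin (q+1) → ℝ)
    (μ : Measure (Matrix (Fin q) (Fin q) ℝ)) (σ : ℝ) {b : Matrix (Fin q) (Fin q) ℝ → ℝ}
    (hb : Measurable b) (y : Fin (q+1) → ℝ)
    (h : ∀ᵐ k ∂μ, 0 < qdot 1 (act k c) y) :
    AEStronglyMeasurable (fun k => b k * (qdot 1 (act k c) y) ^ σ) μ := by
  have hm : Measurable (fun k : Matrix (Fin q) (Fin q) ℝ =>
      b k * Real.exp (Real.log (qdot 1 (act k c) y) * σ)) :=
    hb.mul (Real.measurable_exp.comp ((Real.measurable_log.comp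
      (measurable_qdot_act c y)).mul_const σ))
  apply hm.aestronglyMeasurable.congr
  filter_upwards [h] with k hk
  rw [Real.rpow_def_of_pos hk]


lemma rpow_le_max {a b t s : ℝ} (ha : 0 < a) (hat : a ≤ t) (htb : t ≤ b) :
    t ^ s ≤ max (a ^ s) (b ^ s) := by
  rcases le_or_gt 0 s with hs | hs
  · exact le_max_of_le_right (Real.rpow_le_rpow (ha.le.trans hat) htb hs)
  · exact le_max_of_le_left (Real.rpow_le_rpow_of_nonpos ha hat hs.le)

lemma measurable_act_apply {q : ℕ} (c : Fin (q+1) → ℝ) (i : Fin (q+1)) :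
    Measurable fun k : Matrix (Fin q) (Fin q) ℝ => act k c i := by
  refine Fin.cases ?_ ?_ i
  · exact measurable_const
  · intro j
    have : (fun k : Matrix (Fin q) (Fin q) ℝ => act k c j.succ)
        = fun k => ∑ l, k j l * Fin.tail c l := by
      funext k
      simp [act, Fin.cons_succ, Matrix.mulVec, dotProduct]
    rw [this]
    exact Finset.measurable_sum _ fun l _ => (measurable_entry j l).mul_const _

lemma continuous_nt {q : ℕ} : Continuous fun y : Fin (q+1) → ℝ => nt y := by
  apply Real.continuous_sqrt.comp
  exact continuous_finset_sum _ fun i _ => (continuous_apply i.succ).pow 2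

lemma hasFDeriv_int {q : ℕ} {c : Fin (q+1) → ℝ} (hiso : qdot 1 c c = 0) (hc0 : 0 < c 0)
    {μ : Measure (Matrix (Fin q) (Fin q) ℝ)} [IsProbabilityMeasure μ]
    (hsupp : ∀ᵐ A ∂μ, A ∈ Matrix.orthogonalGroup (Fin q) ℝ ∧ A.det = 1)
    (σ : ℝ) {b : Matrix (Fin q) (Fin q) ℝ → ℝ} (hb : Measurable b)
    {C : ℝ} (hbC : ∀ᵐ k ∂μ, |b k| ≤ C)
    {x : Fin (q+1) → ℝ} (hx : 0 < qdot 1 x x) (hx0 : 0 < x 0) :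
    ∃ D : (Fin (q+1) → ℝ) →L[ℝ] ℝ,
      HasFDerivAt (fun y => ∫ k, b k * (qdot 1 (act k c) y) ^ σ ∂μ) D x ∧
      ∀ v, D v = ∫ k, b k * (σ * (qdot 1 (act k c) x) ^ (σ-1)) * qdot 1 (act k c) v ∂μ := by
  have hC : 0 ≤ C := by
    obtain ⟨k, hk⟩ := hbC.exists
    linarith [abs_nonneg (b k)]
  -- find a compact neighborhood inside the cone
  have hm : Continuous fun y : Fin (q+1) → ℝ => y 0 - nt y :=
    (continuous_apply 0).sub continuous_nt
  have hUo : IsOpen {y : Fin (q+1) → ℝ | 0 < y 0 - nt y} :=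
    isOpen_lt continuous_const hm
  have hxU : x ∈ {y : Fin (q+1) → ℝ | 0 < y 0 - nt y} := sub_pos.2 (nt_lt hx0 hx)
  obtain ⟨ε, hε, hball⟩ := Metric.isOpen_iff.1 hUo x hxU
  set r := ε / 2 with hr
  have hr0 : 0 < r := by positivity
  have hKsub : Metric.closedBall x r ⊆ {y : Fin (q+1) → ℝ | 0 < y 0 - nt y} :=
    (Metric.closedBall_subset_ball (by simp [hr]; linarith)).trans hball
  have hKc : IsCompact (Metric.closedBall x r) := isCompact_closedBall x r
  have hKne : (Metric.closedBall x r).Nonempty := ⟨x, Metric.mem_closedBall_self hr0.le⟩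
  obtain ⟨y₁, hy₁K, hy₁⟩ := hKc.exists_isMinOn hKne hm.continuousOn
  obtain ⟨y₂, hy₂K, hy₂⟩ := hKc.exists_isMaxOn hKne
    (((continuous_apply 0).add continuous_nt).continuousOn)
  set δ := y₁ 0 - nt y₁ with hδdef
  have hδ : 0 < δ := hKsub hy₁K
  set T := y₂ 0 + nt y₂ with hTdef
  set tmin := c 0 * δ with htmin
  set tmax := c 0 * T with htmax
  have htmin0 : 0 < tmin := mul_pos hc0 hδ
  have hδT : δ ≤ T := by
    have h1 : δ ≤ x 0 - nt x := hy₁ (Metric.mem_closedBall_self hr0.le)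
    have h2 : x 0 + nt x ≤ T := hy₂ (Metric.mem_closedBall_self hr0.le)
    have := nt_nonneg x
    linarith
  have htmax0 : 0 < tmax := mul_pos hc0 (lt_of_lt_of_le hδ hδT)
  -- uniform bounds on qdot over closed ball
  have hKt : ∀ y ∈ Metric.closedBall x r, ∀ k ∈ Matrix.orthogonalGroup (Fin q) ℝ,
      tmin ≤ qdot 1 (act k c) y ∧ qdot 1 (act k c) y ≤ tmax := by
    intro y hy k hk
    obtain ⟨h1, h2⟩ := qdot_act_ge hiso hc0 hk y
    constructor
    · refine le_trans ?_ h1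
      exact mul_le_mul_of_nonneg_left (hy₁ hy) hc0.le
    · refine le_trans h2 ?_
      exact mul_le_mul_of_nonneg_left (hy₂ hy) hc0.le
  -- norm bound on lin (act k c)
  set L := c 0 * (1 + Real.sqrt q) with hLdef
  have hL0 : 0 ≤ L := by positivity
  have hL : ∀ k ∈ Matrix.orthogonalGroup (Fin q) ℝ, ‖lin (act k c)‖ ≤ L := by
    intro k hk
    refine (norm_lin_le (act k c)).trans ?_
    rw [Fin.sum_univ_succ]
    have h0 : |act k c 0| = c 0 := by rw [act_zero, abs_of_pos hc0]
    have hsum : ∑ i : Fin q, |act k c i.succ| ≤ Real.sqrt q * c 0 := by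
      have h1 : ∀ i : Fin q, act k c i.succ = Fin.tail (act k c) i := fun i => rfl
      calc ∑ i : Fin q, |act k c i.succ|
          ≤ Real.sqrt q * Real.sqrt (∑ i, (Fin.tail (act k c) i)^2) := by
            refine le_trans (le_of_eq ?_) (abs_sum_le _)
            apply Finset.sum_congr rfl; intro i _; rw [h1]
        _ = Real.sqrt q * c 0 := by
            rw [norm_tail_act hiso hc0 hk, Real.sqrt_sq hc0.le]
    rw [hLdef]; rw [h0]; ring_nf; nlinarith [hsum]
  set B := max (tmin ^ (σ-1)) (tmax ^ (σ-1)) with hBdef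
  have hB0 : 0 ≤ B := le_max_iff.2 (Or.inl (Real.rpow_nonneg htmin0.le _))
  set Bσ := max (tmin ^ σ) (tmax ^ σ) with hBσdef
  set F' : (Fin (q+1) → ℝ) → Matrix (Fin q) (Fin q) ℝ → (Fin (q+1) → ℝ) →L[ℝ] ℝ :=
    fun y k => (b k * (σ * (qdot 1 (act k c) y) ^ (σ-1))) • lin (act k c) with hF'def
  have hxK : x ∈ Metric.closedBall x r := Metric.mem_closedBall_self hr0.le
  -- positivity a.e. at points of the ball
  have hpos : ∀ y ∈ Metric.closedBall x r, ∀ᵐ k ∂μ, 0 < qdot 1 (act k c) y := by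
    intro y hy
    filter_upwards [hsupp] with k hk
    exact lt_of_lt_of_le htmin0 (hKt y hy k hk.1).1
  have hF'bound : ∀ᵐ k ∂μ, ∀ y ∈ Metric.ball x r, ‖F' y k‖ ≤ C * (|σ| * B * L) := by
    filter_upwards [hsupp, hbC] with k hk hCk
    intro y hy
    have hyK : y ∈ Metric.closedBall x r := Metric.ball_subset_closedBall hy
    obtain ⟨h1, h2⟩ := hKt y hyK k hk.1
    have ht0 : 0 < qdot 1 (act k c) y := lt_of_lt_of_le htmin0 h1
    have hrp : (qdot 1 (act k c) y) ^ (σ-1) ≤ B := rpow_le_max htmin0 h1 h2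
    have hrp0 : 0 ≤ (qdot 1 (act k c) y) ^ (σ-1) := Real.rpow_nonneg ht0.le _
    have hlk := hL k hk.1
    have hFy : F' y k = (b k * (σ * (qdot 1 (act k c) y) ^ (σ-1))) • lin (act k c) := rfl
    rw [hFy]
    refine le_trans (norm_smul_le (b k * (σ * qdot 1 (act k c) y ^ (σ - 1)))
      (lin (act k c))) ?_
    rw [Real.norm_eq_abs, abs_mul, abs_mul, abs_of_nonneg hrp0]
    calc |b k| * (|σ| * (qdot 1 (act k c) y) ^ (σ-1)) * ‖lin (act k c)‖
        ≤ C * (|σ| * B) * L := by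
          apply mul_le_mul _ hlk (norm_nonneg _) (by positivity)
          exact mul_le_mul hCk
            (mul_le_mul_of_nonneg_left hrp (abs_nonneg σ)) (by positivity) hC
      _ = C * (|σ| * B * L) := by ring
  -- a.e. strong measurability of F' x
  have hF'asm : AEStronglyMeasurable (F' x) μ := by
    have hmdl : AEStronglyMeasurable (fun k : Matrix (Fin q) (Fin q) ℝ =>
        ∑ i : Fin (q+1), ((b k * (σ * Real.exp (Real.log (qdot 1 (act k c) x) * (σ-1))))
            * (eps 1 i * act k c i)) •
          (ContinuousLinearMap.proj (R := ℝ) (φ := fun _ : Fin (q+1) => ℝ) i)) μ := by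
      apply Finset.aestronglyMeasurable_fun_sum
      intro i _
      apply Measurable.aestronglyMeasurable ?_ |>.smul_const
      exact ((hb.mul ((Real.measurable_exp.comp ((Real.measurable_log.comp
        (measurable_qdot_act c x)).mul_const (σ-1))).const_mul σ)).mul
        ((measurable_act_apply c i).const_mul (eps 1 i)))
    apply hmdl.congr
    filter_upwards [hpos x hxK] with k hkpos
    have hFy : F' x k = (b k * (σ * (qdot 1 (act k c) x) ^ (σ-1))) • lin (act k c) := rfl
    rw [hFy, Real.rpow_def_of_pos hkpos, lin, Finset.smul_sum]
    exact Finset.sum_congr rfl fun i _ => (smul_smul _ _ _).symm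
  have hFmeas : ∀ᶠ y in 𝓝 x,
      AEStronglyMeasurable (fun k => b k * (qdot 1 (act k c) y) ^ σ) μ := by
    refine Filter.eventually_of_mem (Metric.closedBall_mem_nhds x hr0) ?_
    intro y hy
    exact asm_rpow c μ σ hb y (hpos y hy)
  have hFint : Integrable (fun k => b k * (qdot 1 (act k c) x) ^ σ) μ := by
    refine Integrable.mono' (integrable_const (C * Bσ)) (asm_rpow c μ σ hb x (hpos x hxK)) ?_
    filter_upwards [hsupp, hbC] with k hk hCk
    obtain ⟨h1, h2⟩ := hKt x hxK k hk.1
    have ht0 : 0 < qdot 1 (act k c) x := lt_of_lt_of_le htmin0 h1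
    have hrp : (qdot 1 (act k c) x) ^ σ ≤ Bσ := rpow_le_max htmin0 h1 h2
    have hrp0 : 0 ≤ (qdot 1 (act k c) x) ^ σ := Real.rpow_nonneg ht0.le _
    rw [Real.norm_eq_abs, abs_mul, abs_of_nonneg hrp0]
    exact mul_le_mul hCk hrp hrp0 hC
  have hdiff : ∀ᵐ k ∂μ, ∀ y ∈ Metric.ball x r,
      HasFDerivAt (fun y => b k * (qdot 1 (act k c) y) ^ σ) (F' y k) y := by
    filter_upwards [hsupp] with k hk
    intro y hy
    have hyK : y ∈ Metric.closedBall x r := Metric.ball_subset_closedBall hy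
    have ht0 : 0 < qdot 1 (act k c) y := lt_of_lt_of_le htmin0 (hKt y hyK k hk.1).1
    have h1 : HasFDerivAt (fun z => qdot 1 (act k c) z) (lin (act k c)) y := by
      have hfe : (fun z => qdot 1 (act k c) z) = ⇑(lin (act k c)) :=
        funext fun z => (lin_apply _ z).symm
      rw [hfe]
      exact (lin (act k c)).hasFDerivAt
    have h2 := (Real.hasDerivAt_rpow_const (p := σ) (Or.inl ht0.ne')).comp_hasFDerivAt y h1
    have h3 := h2.const_mul (b k)
    have hFy2 : F' y k = (b k * (σ * (qdot 1 (act k c) y) ^ (σ-1))) • lin (act k c) := rfl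
    have hFy3 : F' y k = b k • ((σ * (qdot 1 (act k c) y) ^ (σ-1)) • lin (act k c)) := by
      rw [hFy2, smul_smul]
    rw [hFy3]
    exact h3
  have hmain := hasFDerivAt_integral_of_dominated_of_fderiv_le (Metric.ball_mem_nhds x hr0)
    hFmeas hFint hF'asm hF'bound (integrable_const _) hdiff
  refine ⟨∫ k, F' x k ∂μ, hmain, ?_⟩
  intro v
  have hint : Integrable (F' x) μ := by
    refine Integrable.mono' (integrable_const (C * (|σ| * B * L))) hF'asm ?_
    filter_upwards [hF'bound] with k hk
    exact hk x (Metric.mem_ball_self hr0)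
  rw [ContinuousLinearMap.integral_apply hint v]
  apply integral_congr_ae
  filter_upwards [] with k
  have hFy : F' x k = (b k * (σ * (qdot 1 (act k c) x) ^ (σ-1))) • lin (act k c) := rfl
  rw [hFy]
  simp only [ContinuousLinearMap.coe_smul', Pi.smul_apply, smul_eq_mul]
  rw [lin_apply]


lemma asm_rpow' {q : ℕ} (c : Fin (q+1) → ℝ)
    (μ : Measure (Matrix (Fin q) (Fin q) ℝ)) (σ : ℝ) (y : Fin (q+1) → ℝ)
    (h : ∀ᵐ k ∂μ, 0 < qdot 1 (act k c) y) :
    AEStronglyMeasurable (fun k => (qdot 1 (act k c) y) ^ σ) μ := by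
  have := asm_rpow c μ σ (b := fun _ => (1:ℝ)) measurable_const y h
  simpa using this

lemma ae_bounds {q : ℕ} {c : Fin (q+1) → ℝ} (hiso : qdot 1 c c = 0) (hc0 : 0 < c 0)
    {μ : Measure (Matrix (Fin q) (Fin q) ℝ)}
    (hsupp : ∀ᵐ A ∂μ, A ∈ Matrix.orthogonalGroup (Fin q) ℝ ∧ A.det = 1)
    {y : Fin (q+1) → ℝ} (hy : 0 < qdot 1 y y) (hy0 : 0 < y 0) :
    ∀ᵐ k ∂μ, c 0 * (y 0 - nt y) ≤ qdot 1 (act k c) y ∧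
      qdot 1 (act k c) y ≤ c 0 * (y 0 + nt y) := by
  filter_upwards [hsupp] with k hk
  exact qdot_act_ge hiso hc0 hk.1 y

lemma ae_pos {q : ℕ} {c : Fin (q+1) → ℝ} (hiso : qdot 1 c c = 0) (hc0 : 0 < c 0)
    {μ : Measure (Matrix (Fin q) (Fin q) ℝ)}
    (hsupp : ∀ᵐ A ∂μ, A ∈ Matrix.orthogonalGroup (Fin q) ℝ ∧ A.det = 1)
    {y : Fin (q+1) → ℝ} (hy : 0 < qdot 1 y y) (hy0 : 0 < y 0) :
    ∀ᵐ k ∂μ, 0 < qdot 1 (act k c) y := by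
  filter_upwards [ae_bounds hiso hc0 hsupp hy hy0] with k hk
  have h1 : 0 < c 0 * (y 0 - nt y) := mul_pos hc0 (sub_pos.2 (nt_lt hy0 hy))
  linarith [hk.1]

lemma integrable_b {q : ℕ} {c : Fin (q+1) → ℝ} (hiso : qdot 1 c c = 0) (hc0 : 0 < c 0)
    {μ : Measure (Matrix (Fin q) (Fin q) ℝ)} [IsProbabilityMeasure μ]
    (hsupp : ∀ᵐ A ∂μ, A ∈ Matrix.orthogonalGroup (Fin q) ℝ ∧ A.det = 1)
    (σ : ℝ) {b : Matrix (Fin q) (Fin q) ℝ → ℝ} (hb : Measurable b)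
    {C : ℝ} (hbC : ∀ᵐ k ∂μ, |b k| ≤ C)
    {y : Fin (q+1) → ℝ} (hy : 0 < qdot 1 y y) (hy0 : 0 < y 0) :
    Integrable (fun k => b k * (qdot 1 (act k c) y) ^ σ) μ := by
  have hC : 0 ≤ C := by
    obtain ⟨k, hk⟩ := hbC.exists
    linarith [abs_nonneg (b k)]
  have hlo : 0 < c 0 * (y 0 - nt y) := mul_pos hc0 (sub_pos.2 (nt_lt hy0 hy))
  refine Integrable.mono'
    (integrable_const (C * max ((c 0 * (y 0 - nt y)) ^ σ) ((c 0 * (y 0 + nt y)) ^ σ)))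
    (asm_rpow c μ σ hb y (ae_pos hiso hc0 hsupp hy hy0)) ?_
  filter_upwards [ae_bounds hiso hc0 hsupp hy hy0, hbC] with k hk hCk
  have ht0 : 0 < qdot 1 (act k c) y := lt_of_lt_of_le hlo hk.1
  have hrp := rpow_le_max (s := σ) hlo hk.1 hk.2
  rw [Real.norm_eq_abs, abs_mul, abs_of_nonneg (Real.rpow_nonneg ht0.le σ)]
  exact mul_le_mul hCk hrp (Real.rpow_nonneg ht0.le σ) hC

lemma abs_act_le {q : ℕ} {c : Fin (q+1) → ℝ} (hiso : qdot 1 c c = 0) (hc0 : 0 < c 0)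
    {k : Matrix (Fin q) (Fin q) ℝ} (hk : k ∈ Matrix.orthogonalGroup (Fin q) ℝ)
    (i : Fin (q+1)) : |act k c i| ≤ c 0 := by
  refine Fin.cases ?_ ?_ i
  · rw [act_zero, abs_of_pos hc0]
  · intro j
    have h1 : (Fin.tail (act k c) j)^2 ≤ ∑ i, (Fin.tail (act k c) i)^2 :=
      Finset.single_le_sum (f := fun i => (Fin.tail (act k c) i)^2)
        (fun i _ => sq_nonneg _) (Finset.mem_univ j)
    rw [norm_tail_act hiso hc0 hk] at h1
    have h2 : act k c j.succ = Fin.tail (act k c) j := rfl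
    rw [h2]
    nlinarith [abs_nonneg (Fin.tail (act k c) j), sq_abs (Fin.tail (act k c) j)]

lemma abs_qdot_single_le {q : ℕ} {c : Fin (q+1) → ℝ} (hiso : qdot 1 c c = 0) (hc0 : 0 < c 0)
    {k : Matrix (Fin q) (Fin q) ℝ} (hk : k ∈ Matrix.orthogonalGroup (Fin q) ℝ)
    (i : Fin (q+1)) : |qdot 1 (act k c) (Pi.single i 1)| ≤ c 0 := by
  rw [qdot_single, abs_mul]
  have he : |eps 1 i| = 1 := by unfold eps; split_ifs <;> simp
  rw [he, one_mul]
  exact abs_act_le hiso hc0 hk i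

lemma measurable_mul_left {q : ℕ} (A : Matrix (Fin q) (Fin q) ℝ) :
    Measurable fun B : Matrix (Fin q) (Fin q) ℝ => A * B := by
  apply measurable_pi_lambda
  intro i
  apply measurable_pi_lambda
  intro j
  have : (fun B : Matrix (Fin q) (Fin q) ℝ => (A * B) i j)
      = fun B => ∑ l, A i l * B l j := by
    funext B; rw [Matrix.mul_apply]
  rw [this]
  exact Finset.measurable_sum _ fun l _ => ((measurable_entry l j).const_mul _)

end KASH

open KASH

/-- For a nonzero isotropic `c` with `c₁ > 0` and `K ≅ SO(q)` with Haar
probability measure `μ`, the function `u(x) = ∫_K (kc·x)^ρ dk` is `K`-invariant,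
and its degree-`ρ` homogeneous extension is harmonic for the (1,q)-Laplacian. -/
theorem k_average_spherical_harmonic (q : ℕ) (hq : 2 ≤ q) (ρ : ℝ)
    (c : Fin (q + 1) → ℝ) (hcne : c ≠ 0) (hiso : qdot 1 c c = 0) (hc0 : 0 < c 0)
    (μ : Measure (Matrix (Fin q) (Fin q) ℝ)) [IsProbabilityMeasure μ]
    (hsupp : ∀ᵐ A ∂μ, A ∈ Matrix.orthogonalGroup (Fin q) ℝ ∧ A.det = 1)
    (hinv : ∀ A ∈ Matrix.orthogonalGroup (Fin q) ℝ, A.det = 1 →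
      μ.map (fun B => A * B) = μ) :
    (∀ A ∈ Matrix.orthogonalGroup (Fin q) ℝ, A.det = 1 →
      ∀ x : Fin (q + 1) → ℝ, qdot 1 x x = 1 → 0 < x 0 →
        (∫ k, (qdot 1 (act k c) (act A x)) ^ ρ ∂μ)
          = ∫ k, (qdot 1 (act k c) x) ^ ρ ∂μ) ∧
    (∀ x : Fin (q + 1) → ℝ, 0 < qdot 1 x x → 0 < x 0 →
      lapR 1 (fun y => (Real.sqrt (qdot 1 y y)) ^ ρ *
        ∫ k, (qdot 1 (act k c) (fun i => y i / Real.sqrt (qdot 1 y y))) ^ ρ ∂μ) x = 0) := by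
  constructor
  · -- Part 1: K-invariance
    intro A hA hdet x hx1 hx0
    have hxx : 0 < qdot 1 x x := by rw [hx1]; norm_num
    have hAT : A.transpose ∈ Matrix.orthogonalGroup (Fin q) ℝ := by
      rw [Matrix.mem_orthogonalGroup_iff]
      have hs : star A.transpose = A := by
        have h' : star A.transpose = A.transpose.transpose := rfl
        rw [h', Matrix.transpose_transpose]
      rw [Matrix.transpose_transpose]
      exact transpose_mul_self hA
    have hdetT : A.transpose.det = 1 := by rw [Matrix.det_transpose]; exact hdet
    have hmap := hinv A.transpose hAT hdetT
    have hpt : ∀ k : Matrix (Fin q) (Fin q) ℝ,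
        qdot 1 (act k c) (act A x) = qdot 1 (act (A.transpose * k) c) x := by
      intro k
      rw [qdot_act_left, qdot_act_left, act_zero, tail_act]
      congr 1
      rw [Matrix.dotProduct_mulVec, ← Matrix.mulVec_transpose, Matrix.mulVec_mulVec]
    have hstep1 : (∫ k, (qdot 1 (act k c) (act A x)) ^ ρ ∂μ)
        = ∫ k, (qdot 1 (act (A.transpose * k) c) x) ^ ρ ∂μ := by
      apply integral_congr_ae
      filter_upwards [] with k
      rw [hpt k]
    rw [hstep1]
    have hmeas : AEMeasurable (fun B : Matrix (Fin q) (Fin q) ℝ => A.transpose * B) μ :=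
      (measurable_mul_left A.transpose).aemeasurable
    have hasm : AEStronglyMeasurable (fun k => (qdot 1 (act k c) x) ^ ρ)
        (μ.map (fun B => A.transpose * B)) := by
      rw [hmap]
      exact asm_rpow' c μ ρ x (ae_pos hiso hc0 hsupp hxx hx0)
    calc (∫ k, (qdot 1 (act (A.transpose * k) c) x) ^ ρ ∂μ)
        = ∫ k, (qdot 1 (act k c) x) ^ ρ ∂(μ.map (fun B => A.transpose * B)) :=
          (integral_map hmeas hasm).symm
      _ = ∫ k, (qdot 1 (act k c) x) ^ ρ ∂μ := by rw [hmap]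
  · -- Part 2: harmonicity
    intro x hx hx0
    set U := {y : Fin (q+1) → ℝ | 0 < qdot 1 y y ∧ 0 < y 0} with hUdef
    have hcont : Continuous fun y : Fin (q+1) → ℝ => qdot 1 y y := by
      apply continuous_finset_sum
      intro i _
      exact (continuous_const.mul (continuous_apply i)).mul (continuous_apply i)
    have hUo : IsOpen U :=
      (isOpen_lt continuous_const hcont).inter (isOpen_lt continuous_const (continuous_apply 0))
    have hxU : x ∈ U := ⟨hx, hx0⟩
    set F : (Fin (q+1) → ℝ) → ℝ := fun y => (Real.sqrt (qdot 1 y y)) ^ ρ *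
      ∫ k, (qdot 1 (act k c) (fun i => y i / Real.sqrt (qdot 1 y y))) ^ ρ ∂μ with hFdef
    set g : (Fin (q+1) → ℝ) → ℝ :=
      fun y => ∫ k, (1:ℝ) * (qdot 1 (act k c) y) ^ ρ ∂μ with hgdef
    have hFg : ∀ y ∈ U, F y = g y := by
      intro y hy
      have hrr : 0 < Real.sqrt (qdot 1 y y) := Real.sqrt_pos.2 hy.1
      have hq1 : ∀ k : Matrix (Fin q) (Fin q) ℝ,
          qdot 1 (act k c) (fun i => y i / Real.sqrt (qdot 1 y y))
            = qdot 1 (act k c) y / Real.sqrt (qdot 1 y y) := by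
        intro k
        unfold qdot
        rw [Finset.sum_div]
        apply Finset.sum_congr rfl
        intro i _
        ring
      have hFy : F y = (Real.sqrt (qdot 1 y y)) ^ ρ *
          ∫ k, (qdot 1 (act k c) (fun i => y i / Real.sqrt (qdot 1 y y))) ^ ρ ∂μ := rfl
      have hgy : g y = ∫ k, (1:ℝ) * (qdot 1 (act k c) y) ^ ρ ∂μ := rfl
      rw [hFy, hgy, ← integral_const_mul]
      apply integral_congr_ae
      filter_upwards [ae_pos hiso hc0 hsupp hy.1 hy.2] with k hk
      rw [hq1 k, Real.div_rpow hk.le hrr.le, one_mul]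
      field_simp
    have hFg_ev : ∀ y ∈ U, F =ᶠ[𝓝 y] g :=
      fun y hy => Filter.eventually_of_mem (hUo.mem_nhds hy) hFg
    have hbound1 : ∀ᵐ k ∂μ, |(1:ℝ)| ≤ (1:ℝ) := by filter_upwards [] with k; simp
    have hfd : ∀ y ∈ U, ∀ v, fderiv ℝ g y v
        = ∫ k, (1:ℝ) * (ρ * (qdot 1 (act k c) y) ^ (ρ-1)) * qdot 1 (act k c) v ∂μ := by
      intro y hy v
      obtain ⟨D, hD, hf⟩ := hasFDeriv_int hiso hc0 hsupp ρ
        (measurable_const (a := (1:ℝ))) hbound1 hy.1 hy.2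
      rw [hgdef, hD.fderiv]
      exact hf v
    have hmain : ∀ i : Fin (q+1),
        fderiv ℝ (fun y => fderiv ℝ F y (Pi.single i 1)) x (Pi.single i 1)
          = ∫ k, (ρ * qdot 1 (act k c) (Pi.single i 1))
              * ((ρ-1) * (qdot 1 (act k c) x) ^ (ρ-1-1))
              * qdot 1 (act k c) (Pi.single i 1) ∂μ := by
      intro i
      set bi : Matrix (Fin q) (Fin q) ℝ → ℝ :=
        fun k => ρ * qdot 1 (act k c) (Pi.single i 1) with hbidef
      have hbi : Measurable bi := (measurable_qdot_act c (Pi.single i 1)).const_mul ρ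
      have hbiC : ∀ᵐ k ∂μ, |bi k| ≤ |ρ| * c 0 := by
        filter_upwards [hsupp] with k hk
        have hbik : bi k = ρ * qdot 1 (act k c) (Pi.single i 1) := rfl
        rw [hbik, abs_mul]
        exact mul_le_mul_of_nonneg_left (abs_qdot_single_le hiso hc0 hk.1 i) (abs_nonneg ρ)
      set Gi : (Fin (q+1) → ℝ) → ℝ :=
        fun y => ∫ k, bi k * (qdot 1 (act k c) y) ^ (ρ-1) ∂μ with hGidef
      have hGieq : ∀ y ∈ U, fderiv ℝ g y (Pi.single i 1) = Gi y := by
        intro y hy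
        have hGiy : Gi y = ∫ k, bi k * (qdot 1 (act k c) y) ^ (ρ-1) ∂μ := rfl
        rw [hfd y hy (Pi.single i 1), hGiy]
        apply integral_congr_ae
        filter_upwards [] with k
        have hbik : bi k = ρ * qdot 1 (act k c) (Pi.single i 1) := rfl
        rw [hbik]
        ring
      have he1 : (fun y => fderiv ℝ F y (Pi.single i 1))
          =ᶠ[𝓝 x] fun y => fderiv ℝ g y (Pi.single i 1) := by
        refine Filter.eventually_of_mem (hUo.mem_nhds hxU) ?_
        intro y hy
        show fderiv ℝ F y (Pi.single i 1) = fderiv ℝ g y (Pi.single i 1)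
        rw [(hFg_ev y hy).fderiv_eq]
      have he2 : (fun y => fderiv ℝ g y (Pi.single i 1)) =ᶠ[𝓝 x] Gi := by
        refine Filter.eventually_of_mem (hUo.mem_nhds hxU) ?_
        intro y hy
        exact hGieq y hy
      rw [(he1.trans he2).fderiv_eq]
      obtain ⟨D, hD, hf⟩ := hasFDeriv_int hiso hc0 hsupp (ρ-1) hbi hbiC hx hx0
      rw [hGidef, hD.fderiv, hf (Pi.single i 1)]
    unfold lapR
    have hsum : ∀ i : Fin (q+1), eps 1 i *
        fderiv ℝ (fun y => fderiv ℝ F y (Pi.single i 1)) x (Pi.single i 1)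
          = ∫ k, eps 1 i * ((ρ * qdot 1 (act k c) (Pi.single i 1))
              * ((ρ-1) * (qdot 1 (act k c) x) ^ (ρ-1-1))
              * qdot 1 (act k c) (Pi.single i 1)) ∂μ := by
      intro i
      rw [hmain i, ← integral_const_mul]
    rw [Finset.sum_congr rfl (fun i _ => hsum i)]
    have hintg : ∀ i : Fin (q+1), Integrable (fun k =>
        eps 1 i * ((ρ * qdot 1 (act k c) (Pi.single i 1))
          * ((ρ-1) * (qdot 1 (act k c) x) ^ (ρ-1-1))
          * qdot 1 (act k c) (Pi.single i 1))) μ := by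
      intro i
      have heq : (fun k => eps 1 i * ((ρ * qdot 1 (act k c) (Pi.single i 1))
          * ((ρ-1) * (qdot 1 (act k c) x) ^ (ρ-1-1))
          * qdot 1 (act k c) (Pi.single i 1)))
        = fun k => (eps 1 i * ρ * (ρ-1) * qdot 1 (act k c) (Pi.single i 1)
            * qdot 1 (act k c) (Pi.single i 1)) * (qdot 1 (act k c) x) ^ (ρ-1-1) := by
        funext k
        ring
      rw [heq]
      refine integrable_b hiso hc0 hsupp (ρ-1-1) ?_
        (C := |ρ| * |ρ-1| * (c 0 * c 0)) ?_ hx hx0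
      · exact (((measurable_qdot_act c (Pi.single i 1)).const_mul
          (eps 1 i * ρ * (ρ-1))).mul (measurable_qdot_act c (Pi.single i 1)))
      · filter_upwards [hsupp] with k hk
        have h1 := abs_qdot_single_le hiso hc0 hk.1 i
        have he : |eps 1 i| = 1 := by unfold eps; split_ifs <;> simp
        have h2 : |eps 1 i * ρ * (ρ-1) * qdot 1 (act k c) (Pi.single i 1)
            * qdot 1 (act k c) (Pi.single i 1)|
            = |ρ| * |ρ-1| * (|qdot 1 (act k c) (Pi.single i 1)|
              * |qdot 1 (act k c) (Pi.single i 1)|) := by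
          rw [abs_mul, abs_mul, abs_mul, abs_mul, he]
          ring
        rw [h2]
        have h3 : |qdot 1 (act k c) (Pi.single i 1)| * |qdot 1 (act k c) (Pi.single i 1)|
            ≤ c 0 * c 0 := mul_le_mul h1 h1 (abs_nonneg _) hc0.le
        exact mul_le_mul_of_nonneg_left h3 (by positivity)
    rw [← integral_finset_sum Finset.univ (fun i _ => hintg i)]
    have hzero : ∀ᵐ k ∂μ, (∑ i : Fin (q+1), eps 1 i *
        ((ρ * qdot 1 (act k c) (Pi.single i 1))
          * ((ρ-1) * (qdot 1 (act k c) x) ^ (ρ-1-1))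
          * qdot 1 (act k c) (Pi.single i 1))) = 0 := by
      filter_upwards [hsupp] with k hk
      have hww : qdot 1 (act k c) (act k c) = 0 := by rw [qdot_act_act hk.1, hiso]
      have hterm : ∀ i : Fin (q+1), eps 1 i *
          ((ρ * qdot 1 (act k c) (Pi.single i 1))
            * ((ρ-1) * (qdot 1 (act k c) x) ^ (ρ-1-1))
            * qdot 1 (act k c) (Pi.single i 1))
          = (ρ * (ρ-1) * (qdot 1 (act k c) x) ^ (ρ-1-1))
              * (eps 1 i * act k c i * act k c i) := by
        intro i
        rw [qdot_single]
        have he : eps 1 i = 1 ∨ eps 1 i = -1 := by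
          unfold eps; split_ifs
          exacts [Or.inl rfl, Or.inr rfl]
        rcases he with he | he <;> rw [he] <;> ring
      rw [Finset.sum_congr rfl (fun i _ => hterm i), ← Finset.mul_sum]
      have hqd : ∑ i : Fin (q+1), eps 1 i * act k c i * act k c i
          = qdot 1 (act k c) (act k c) := rfl
      rw [hqd, hww, mul_zero]
    exact integral_eq_zero_of_ae hzero
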